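/- Suppose ⟨·,·⟩ is naturally reductive (⟨[X,Y]_𝔪,Z⟩ + ⟨Y,[X,Z]_𝔪⟩ = 0 for all X,Y,Z ∈ 𝔪). Then for every t ∈ ℝ and every Z ∈ 𝔪, the spin lift of the connection map Λ^t(Z)Y = t[Z,Y]_𝔪, namely Λ̃^t(Z) := (t/4) Σ_{j,k} ⟨[Z,Z_j]_𝔪, Z_k⟩ Z_j·Z_k ∈ Cl(𝔪), satisfies Λ̃^t(Z) = −(t/6)(H·Z + Z·H); equivalently, the covariant derivative of a constant spinor in direction Z is Clifford multiplication by (t/3)(Z ⌟ H). -/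

import Mathlib

open scoped BigOperators

/-- The quadratic form `v ↦ −⟨v,v⟩` on the subspace `𝔪`, built from a bilinear form `B`
on the ambient space; the associated Clifford algebra satisfies
`v·w + w·v = −2⟨v,w⟩·1` for `v,w ∈ 𝔪`. -/
noncomputable def mQF {𝔤 : Type*} [AddCommGroup 𝔤] [Module ℝ 𝔤]
    (𝔪 : Submodule ℝ 𝔤) (B : LinearMap.BilinForm ℝ 𝔤) : QuadraticForm ℝ ↥𝔪 :=
  LinearMap.BilinMap.toQuadraticMap ((-B).compl₁₂ 𝔪.subtype 𝔪.subtype)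

/-- The cubic element `H = (1/4) Σ_{i,j,k} ⟨[Z_i,Z_j]_𝔪, Z_k⟩ Z_i·Z_j·Z_k ∈ Cl(𝔪)`. -/
noncomputable def cubicH {𝔤 : Type*} [LieRing 𝔤] [LieAlgebra ℝ 𝔤]
    (𝔪 : Submodule ℝ 𝔤) (p𝔪 : 𝔤 →ₗ[ℝ] 𝔤) (B : LinearMap.BilinForm ℝ 𝔤)
    {n : ℕ} (Z : Fin n → 𝔤) (hZ𝔪 : ∀ i, Z i ∈ 𝔪) : CliffordAlgebra (mQF 𝔪 B) :=
  (1 / 4 : ℝ) • ∑ i, ∑ j, ∑ k, B (p𝔪 ⁅Z i, Z j⁆) (Z k) •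
    (CliffordAlgebra.ι (mQF 𝔪 B) ⟨Z i, hZ𝔪 i⟩ *
      CliffordAlgebra.ι (mQF 𝔪 B) ⟨Z j, hZ𝔪 j⟩ *
      CliffordAlgebra.ι (mQF 𝔪 B) ⟨Z k, hZ𝔪 k⟩)

private lemma quad_aux {A : Type*} [Ring A] [Algebra ℝ A] (x y z w : A) (a b c : ℝ)
    (hxy : x*y = -(y*x) - a•(1:A)) (hxz : x*z = -(z*x) - b•(1:A)) (hxw : x*w = -(w*x) - c•(1:A)) :
    x*(y*z*w) + y*z*w*x = -(a•(z*w)) + b•(y*w) - c•(y*z) := by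
  have h1 : x*(y*z*w) = (x*y)*(z*w) := by noncomm_ring
  rw [h1, hxy]
  have h2 : (-(y * x) - a • (1:A)) * (z * w) = -(y*(x*z)*w) - a•(z*w) := by noncomm_ring
  rw [h2, hxz]
  have h3 : -(y * (-(z * x) - b • (1:A)) * w) = (y*z)*(x*w) + b•(y*w) := by noncomm_ring
  rw [h3, hxw]
  noncomm_ring

private lemma mQF_rel {𝔤 : Type*} [AddCommGroup 𝔤] [Module ℝ 𝔤]
    (𝔪 : Submodule ℝ 𝔤) (B : LinearMap.BilinForm ℝ 𝔤) (v w : ↥𝔪) :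
    CliffordAlgebra.ι (mQF 𝔪 B) v * CliffordAlgebra.ι (mQF 𝔪 B) w =
      -(CliffordAlgebra.ι (mQF 𝔪 B) w * CliffordAlgebra.ι (mQF 𝔪 B) v)
        - (B (v:𝔤) (w:𝔤) + B (w:𝔤) (v:𝔤)) • (1 : CliffordAlgebra (mQF 𝔪 B)) := by
  have h := CliffordAlgebra.ι_mul_ι_add_swap (Q := mQF 𝔪 B) v w
  have hp : QuadraticMap.polar (mQF 𝔪 B) v w = -(B (v:𝔤) (w:𝔤) + B (w:𝔤) (v:𝔤)) := by
    rw [mQF, LinearMap.BilinMap.polar_toQuadraticMap]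
    simp [LinearMap.compl₁₂_apply]
    ring
  rw [hp, Algebra.algebraMap_eq_smul_one] at h
  rw [eq_sub_of_add_eq h]
  module

private lemma sum1_collapse {A : Type*} [AddCommGroup A] {n : ℕ} (l : Fin n) (G : Fin n → A) :
    ∑ k, (if l = k then G k else 0) = G l := by simp

private lemma sum2_collapse {A : Type*} [AddCommGroup A] {n : ℕ} (l : Fin n)
    (G : Fin n → Fin n → A) :
    ∑ j, ∑ k, (if l = j then G j k else 0) = ∑ k, G l k := by
  have h : ∀ j, ∑ k, (if l = j then G j k else 0) = if l = j then ∑ k, G j k else 0 := by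
    intro j; split_ifs <;> simp
  simp only [h]; simp

private lemma sum3_collapse {A : Type*} [AddCommGroup A] {n : ℕ} (l : Fin n)
    (G : Fin n → Fin n → Fin n → A) :
    ∑ i, ∑ j, ∑ k, (if l = i then G i j k else 0) = ∑ j, ∑ k, G l j k := by
  have h : ∀ i, ∑ j, ∑ k, (if l = i then G i j k else 0)
      = if l = i then ∑ j, ∑ k, G i j k else 0 := by
    intro i; split_ifs <;> simp
  simp only [h]; simp

private lemma core_basis {A : Type*} [Ring A] [Algebra ℝ A] {n : ℕ}
    (e : Fin n → A) (c : Fin n → Fin n → Fin n → ℝ)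
    (hrel : ∀ a b, e a * e b = -(e b * e a) - (if a = b then (2:ℝ) else 0) • (1:A))
    (hc1 : ∀ i j k, c j i k = - c i j k)
    (hc2 : ∀ i j k, c i k j = - c i j k)
    (l : Fin n) :
    (∑ i, ∑ j, ∑ k, c i j k • (e i * e j * e k)) * e l
      + e l * (∑ i, ∑ j, ∑ k, c i j k • (e i * e j * e k))
      = (-6 : ℝ) • ∑ j, ∑ k, c l j k • (e j * e k) := by
  have expand : ∀ i j k : Fin n,
      c i j k • (e i * e j * e k) * e l + e l * (c i j k • (e i * e j * e k))
        = (if l = i then (-2:ℝ) * c i j k else 0) • (e j * e k)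
          + (if l = j then (2:ℝ) * c i j k else 0) • (e i * e k)
          + (if l = k then (-2:ℝ) * c i j k else 0) • (e i * e j) := by
    intro i j k
    have h := quad_aux (e l) (e i) (e j) (e k) _ _ _ (hrel l i) (hrel l j) (hrel l k)
    have hL : c i j k • (e i * e j * e k) * e l + e l * (c i j k • (e i * e j * e k))
        = c i j k • (e l * (e i * e j * e k) + (e i * e j * e k) * e l) := by
      rw [smul_mul_assoc, mul_smul_comm, smul_add, add_comm]
    rw [hL, add_comm (e l * (e i * e j * e k)), add_comm ((e i * e j * e k) * e l)] at *
    rw [hL]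
    rw [h]
    split_ifs <;> module
  calc (∑ i, ∑ j, ∑ k, c i j k • (e i * e j * e k)) * e l
      + e l * (∑ i, ∑ j, ∑ k, c i j k • (e i * e j * e k))
      = ∑ i, ∑ j, ∑ k, (c i j k • (e i * e j * e k) * e l
          + e l * (c i j k • (e i * e j * e k))) := by
        simp only [Finset.sum_mul, Finset.mul_sum, ← Finset.sum_add_distrib]
    _ = ∑ i, ∑ j, ∑ k, ((if l = i then ((-2:ℝ) * c i j k) • (e j * e k) else 0)
          + (if l = j then ((2:ℝ) * c i j k) • (e i * e k) else 0)
          + (if l = k then ((-2:ℝ) * c i j k) • (e i * e j) else 0)) := by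
        refine Finset.sum_congr rfl fun i _ => Finset.sum_congr rfl fun j _ =>
          Finset.sum_congr rfl fun k _ => ?_
        rw [expand i j k]
        simp only [ite_smul, zero_smul]
    _ = (∑ j, ∑ k, ((-2:ℝ) * c l j k) • (e j * e k))
          + (∑ i, ∑ k, ((2:ℝ) * c i l k) • (e i * e k))
          + (∑ i, ∑ j, ((-2:ℝ) * c i j l) • (e i * e j)) := by
        simp only [Finset.sum_add_distrib]
        have hB : ∑ i, ∑ j, ∑ k, (if l = j then ((2:ℝ) * c i j k) • (e i * e k) else 0)
            = ∑ i, ∑ k, ((2:ℝ) * c i l k) • (e i * e k) :=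
          Finset.sum_congr rfl fun i _ => sum2_collapse l _
        have hC : ∑ i, ∑ j, ∑ k, (if l = k then ((-2:ℝ) * c i j k) • (e i * e j) else 0)
            = ∑ i, ∑ j, ((-2:ℝ) * c i j l) • (e i * e j) :=
          Finset.sum_congr rfl fun i _ => Finset.sum_congr rfl fun j _ => sum1_collapse l _
        rw [sum3_collapse l (fun i j k => ((-2:ℝ) * c i j k) • (e j * e k)), hB, hC]
    _ = (-6 : ℝ) • ∑ j, ∑ k, c l j k • (e j * e k) := by
        have h2 : ∀ i k : Fin n, ((2:ℝ) * c i l k) • (e i * e k)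
            = ((-2:ℝ) * c l i k) • (e i * e k) := by
          intro i k; rw [hc1 i l k]; ring_nf
        have h3 : ∀ i j : Fin n, ((-2:ℝ) * c i j l) • (e i * e j)
            = ((-2:ℝ) * c l i j) • (e i * e j) := by
          intro i j
          have : c i j l = c l i j := by rw [show c i j l = - c i l j from hc2 i l j, hc1 i l j]
          rw [this]
        simp only [h2, h3, Finset.smul_sum]
        rw [← Finset.sum_add_distrib, ← Finset.sum_add_distrib]
        refine Finset.sum_congr rfl fun j _ => ?_
        rw [← Finset.sum_add_distrib, ← Finset.sum_add_distrib]
        refine Finset.sum_congr rfl fun k _ => ?_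
        module

/-- On a naturally reductive space, the spin lift
`Λ̃^t(Z) = (t/4) Σ_{j,k} ⟨[Z,Z_j]_𝔪, Z_k⟩ Z_j·Z_k` of the connection map
`Λ^t(Z)Y = t[Z,Y]_𝔪` satisfies `Λ̃^t(Z) = −(t/6)(H·Z + Z·H)`; i.e. the covariant
derivative of a constant spinor in direction `Z` is Clifford multiplication by
`(t/3)(Z ⌟ H)`. -/
theorem stmt19
    {𝔤 : Type*} [LieRing 𝔤] [LieAlgebra ℝ 𝔤] [FiniteDimensional ℝ 𝔤]
    (𝔥 𝔪 : Submodule ℝ 𝔤)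
    (p𝔥 p𝔪 : 𝔤 →ₗ[ℝ] 𝔤)
    (hsum : ∀ x, p𝔥 x + p𝔪 x = x)
    (hmem𝔥 : ∀ x, p𝔥 x ∈ 𝔥) (hmem𝔪 : ∀ x, p𝔪 x ∈ 𝔪)
    (hid𝔥 : ∀ x ∈ 𝔥, p𝔥 x = x) (hid𝔪 : ∀ x ∈ 𝔪, p𝔪 x = x)
    (hsub : ∀ x ∈ 𝔥, ∀ y ∈ 𝔥, ⁅x, y⁆ ∈ 𝔥)
    (hhm : ∀ x ∈ 𝔥, ∀ y ∈ 𝔪, ⁅x, y⁆ ∈ 𝔪)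
    (B : LinearMap.BilinForm ℝ 𝔤)
    (hBsymm : ∀ x ∈ 𝔪, ∀ y ∈ 𝔪, B x y = B y x)
    (hBpos : ∀ x ∈ 𝔪, x ≠ 0 → 0 < B x x)
    (hnat : ∀ x ∈ 𝔪, ∀ y ∈ 𝔪, ∀ z ∈ 𝔪, B (p𝔪 ⁅x, y⁆) z + B y (p𝔪 ⁅x, z⁆) = 0)
    {n : ℕ} (Z : Fin n → 𝔤) (hZ𝔪 : ∀ i, Z i ∈ 𝔪)
    (hZon : ∀ i j, B (Z i) (Z j) = if i = j then 1 else 0)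
    (hZspan : Submodule.span ℝ (Set.range Z) = 𝔪) :
    ∀ t : ℝ, ∀ w : 𝔤, ∀ hw : w ∈ 𝔪,
      (t / 4) • ∑ j, ∑ k, B (p𝔪 ⁅w, Z j⁆) (Z k) •
          (CliffordAlgebra.ι (mQF 𝔪 B) ⟨Z j, hZ𝔪 j⟩ *
            CliffordAlgebra.ι (mQF 𝔪 B) ⟨Z k, hZ𝔪 k⟩) =
        (-(t / 6)) • (cubicH 𝔪 p𝔪 B Z hZ𝔪 * CliffordAlgebra.ι (mQF 𝔪 B) ⟨w, hw⟩
          + CliffordAlgebra.ι (mQF 𝔪 B) ⟨w, hw⟩ * cubicH 𝔪 p𝔪 B Z hZ𝔪) := by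
  classical
  intro t w hw
  have hrel : ∀ a b : Fin n,
      CliffordAlgebra.ι (mQF 𝔪 B) ⟨Z a, hZ𝔪 a⟩ * CliffordAlgebra.ι (mQF 𝔪 B) ⟨Z b, hZ𝔪 b⟩ =
        -(CliffordAlgebra.ι (mQF 𝔪 B) ⟨Z b, hZ𝔪 b⟩ * CliffordAlgebra.ι (mQF 𝔪 B) ⟨Z a, hZ𝔪 a⟩)
          - (if a = b then (2:ℝ) else 0) • 1 := by
    intro a b
    rw [mQF_rel 𝔪 B ⟨Z a, hZ𝔪 a⟩ ⟨Z b, hZ𝔪 b⟩]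
    congr 1
    rw [show ((⟨Z a, hZ𝔪 a⟩ : ↥𝔪) : 𝔤) = Z a from rfl,
      show ((⟨Z b, hZ𝔪 b⟩ : ↥𝔪) : 𝔤) = Z b from rfl, hZon, hZon]
    by_cases hab : a = b
    · subst hab; norm_num
    · simp [hab, Ne.symm hab]
  have hc1 : ∀ i j k : Fin n, B (p𝔪 ⁅Z j, Z i⁆) (Z k) = - B (p𝔪 ⁅Z i, Z j⁆) (Z k) := by
    intro i j k
    rw [← lie_skew, map_neg, map_neg, LinearMap.neg_apply]
  have hc2 : ∀ i j k : Fin n, B (p𝔪 ⁅Z i, Z k⁆) (Z j) = - B (p𝔪 ⁅Z i, Z j⁆) (Z k) := by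
    intro i j k
    have h := hnat (Z i) (hZ𝔪 i) (Z j) (hZ𝔪 j) (Z k) (hZ𝔪 k)
    have hs := hBsymm (Z j) (hZ𝔪 j) (p𝔪 ⁅Z i, Z k⁆) (hmem𝔪 _)
    linarith
  have basis : ∀ l : Fin n,
      (t / 4) • ∑ j, ∑ k, B (p𝔪 ⁅Z l, Z j⁆) (Z k) •
          (CliffordAlgebra.ι (mQF 𝔪 B) ⟨Z j, hZ𝔪 j⟩ *
            CliffordAlgebra.ι (mQF 𝔪 B) ⟨Z k, hZ𝔪 k⟩) =
        (-(t / 6)) • (cubicH 𝔪 p𝔪 B Z hZ𝔪 * CliffordAlgebra.ι (mQF 𝔪 B) ⟨Z l, hZ𝔪 l⟩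
          + CliffordAlgebra.ι (mQF 𝔪 B) ⟨Z l, hZ𝔪 l⟩ * cubicH 𝔪 p𝔪 B Z hZ𝔪) := by
    intro l
    have key := core_basis (fun i => CliffordAlgebra.ι (mQF 𝔪 B) ⟨Z i, hZ𝔪 i⟩)
      (fun i j k => B (p𝔪 ⁅Z i, Z j⁆) (Z k)) hrel hc1 hc2 l
    rw [cubicH, smul_mul_assoc, mul_smul_comm, ← smul_add, key]
    module
  -- extend to all of 𝔪 by linearity
  have main : ∀ w', w' ∈ Submodule.span ℝ (Set.range Z) → ∀ hw' : w' ∈ 𝔪,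
      (t / 4) • ∑ j, ∑ k, B (p𝔪 ⁅w', Z j⁆) (Z k) •
          (CliffordAlgebra.ι (mQF 𝔪 B) ⟨Z j, hZ𝔪 j⟩ *
            CliffordAlgebra.ι (mQF 𝔪 B) ⟨Z k, hZ𝔪 k⟩) =
        (-(t / 6)) • (cubicH 𝔪 p𝔪 B Z hZ𝔪 * CliffordAlgebra.ι (mQF 𝔪 B) ⟨w', hw'⟩
          + CliffordAlgebra.ι (mQF 𝔪 B) ⟨w', hw'⟩ * cubicH 𝔪 p𝔪 B Z hZ𝔪) := by
    intro w' hsp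
    induction hsp using Submodule.span_induction with
    | mem x hx =>
      obtain ⟨i, rfl⟩ := hx
      intro hw'
      exact basis i
    | zero =>
      intro h0
      have hz : (⟨(0:𝔤), h0⟩ : ↥𝔪) = 0 := rfl
      simp [hz, zero_lie]
    | add x y hx hy ihx ihy =>
      intro hxy
      have hxm : x ∈ 𝔪 := hZspan ▸ hx
      have hym : y ∈ 𝔪 := hZspan ▸ hy
      have e1 := ihx hxm
      have e2 := ihy hym
      have hsub2 : (⟨x + y, hxy⟩ : ↥𝔪) = ⟨x, hxm⟩ + ⟨y, hym⟩ := rfl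
      have hcoef : ∀ j k : Fin n, B (p𝔪 ⁅x + y, Z j⁆) (Z k)
          = B (p𝔪 ⁅x, Z j⁆) (Z k) + B (p𝔪 ⁅y, Z j⁆) (Z k) := by
        intro j k; rw [add_lie, map_add, map_add, LinearMap.add_apply]
      rw [hsub2, map_add]
      simp only [hcoef, add_smul, Finset.sum_add_distrib, smul_add]
      rw [e1, e2]
      simp only [mul_add, add_mul, smul_add]
      abel
    | smul a x hx ihx =>
      intro h
      have hxm : x ∈ 𝔪 := hZspan ▸ hx
      have e1 := ihx hxm
      have hsub2 : (⟨a • x, h⟩ : ↥𝔪) = a • (⟨x, hxm⟩ : ↥𝔪) := rfl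
      have hcoef : ∀ j k : Fin n, B (p𝔪 ⁅a • x, Z j⁆) (Z k)
          = a * B (p𝔪 ⁅x, Z j⁆) (Z k) := by
        intro j k; rw [smul_lie, map_smul, map_smul, LinearMap.smul_apply, smul_eq_mul]
      rw [hsub2, map_smul]
      simp only [hcoef, mul_smul, ← Finset.smul_sum]
      rw [smul_comm (t/4) a, e1]
      simp only [mul_smul_comm, smul_mul_assoc]
      module
  exact main w (hZspan ▸ hw) hw
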